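/- Let κ, λ ∈ (0,1), let Γ be the set of bounded measures on [n] of density at least κ, let μ₁(i) = κ for all i, and let ℓ₁,…,ℓ_{T+1} : [n] → [0,1] be loss vectors. For each t define μ_t = Π_Γ( i ↦ e^{−λ·Σ_{s<t} ℓ_s(i)}·μ₁(i) ). Then ‖μ_T − μ_{T+1}‖₁ = Σᵢ|μ_T(i) − μ_{T+1}(i)| ≤ λκn, and consequently M(μ̂_T, ℓ_T) − M(μ̂_{T+1}, ℓ_T) ≤ λ, where M(μ̂, ℓ) = Σᵢ μ̂(i)·ℓ(i). -/

import Mathlib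

/-- KL divergence between bounded measures on `Fin n`. -/
noncomputable def KLdiv {n : ℕ} (μ₁ μ₂ : Fin n → ℝ) : ℝ :=
  ∑ i, (μ₁ i * Real.log (μ₁ i / μ₂ i) + μ₂ i - μ₁ i)

/-- A bounded measure on `[n]` is a function into `[0,1]`. -/
def IsBddMeasure {n : ℕ} (μ : Fin n → ℝ) : Prop := ∀ i, μ i ∈ Set.Icc (0:ℝ) 1

/-- `ν` is the Bregman projection of `μ̃` onto the set `Γ` of κ-dense bounded
measures: it lies in `Γ` and minimizes `KL(·‖μ̃)` there. -/
def IsBregmanProj {n : ℕ} (κ : ℝ) (μt ν : Fin n → ℝ) : Prop :=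
  (IsBddMeasure ν ∧ κ * n ≤ ∑ i, ν i) ∧
    ∀ ρ : Fin n → ℝ, IsBddMeasure ρ → κ * n ≤ ∑ i, ρ i → KLdiv ν μt ≤ KLdiv ρ μt


private lemma deriv_aux (p : ℝ) (h0 : 0 < p) (h1 : p < 1) :
    HasDerivAt (fun q : ℝ => Real.log q - Real.log (1 - q) - 4 * q + 2)
      (p⁻¹ + (1 - p)⁻¹ - 4) p := by
  have h2 : (0:ℝ) < 1 - p := by linarith
  have hl : HasDerivAt (fun q : ℝ => Real.log q) p⁻¹ p := Real.hasDerivAt_log h0.ne'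
  have hinner : HasDerivAt (fun q : ℝ => 1 - q) (-1) p := by
    simpa using ((hasDerivAt_id p).const_sub 1)
  have hl2 : HasDerivAt (fun q : ℝ => Real.log (1 - q)) (-1 / (1 - p)) p :=
    hinner.log h2.ne'
  have h4 : HasDerivAt (fun q : ℝ => 4 * q) 4 p := by
    simpa using (hasDerivAt_id p).const_mul (4:ℝ)
  have := ((hl.sub hl2).sub h4).add_const (2:ℝ)
  refine this.congr_deriv ?_
  ring

private lemma g_mono : MonotoneOn (fun q : ℝ => Real.log q - Real.log (1 - q) - 4 * q + 2)
    (Set.Ioo (0:ℝ) 1) := by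
  apply monotoneOn_of_deriv_nonneg (convex_Ioo 0 1)
  · apply ContinuousOn.add _ continuousOn_const
    apply ContinuousOn.sub
    · apply ContinuousOn.sub
      · exact Real.continuousOn_log.mono (by intro x hx; exact ne_of_gt hx.1)
      · apply ContinuousOn.log (by fun_prop)
        intro x hx; simp only [Set.mem_Ioo] at hx; intro h; linarith [hx.2]
    · fun_prop
  · rw [interior_Ioo]
    intro x hx
    exact (deriv_aux x hx.1 hx.2).differentiableAt.differentiableWithinAt
  · rw [interior_Ioo]
    intro x hx
    rw [(deriv_aux x hx.1 hx.2).deriv]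
    have h0 := hx.1; have h1 : (0:ℝ) < 1 - x := by linarith [hx.2]
    have key : x⁻¹ + (1-x)⁻¹ - 4 = (1 - 2*x)^2 / (x * (1-x)) := by
      field_simp; ring
    have h2 : (0:ℝ) ≤ (1 - 2*x)^2 / (x * (1-x)) := div_nonneg (sq_nonneg _) (by positivity)
    linarith

private lemma deriv_f (p : ℝ) (h0 : 0 < p) (h1 : p < 1) :
    HasDerivAt (fun q : ℝ => q * Real.log q + (1 - q) * Real.log (1 - q)
      + Real.log 2 - 2 * (q - 1/2)^2)
      (Real.log p - Real.log (1 - p) - 4 * p + 2) p := by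
  have h2 : (0:ℝ) < 1 - p := by linarith
  have ha : HasDerivAt (fun q : ℝ => q * Real.log q) (Real.log p + 1) p := by
    have := (hasDerivAt_id p).mul (Real.hasDerivAt_log h0.ne')
    refine this.congr_deriv ?_
    show 1 * Real.log p + p * p⁻¹ = _
    rw [mul_inv_cancel₀ h0.ne']; ring
  have hinner : HasDerivAt (fun q : ℝ => 1 - q) (-1) p := by
    simpa using ((hasDerivAt_id p).const_sub 1)
  have hb : HasDerivAt (fun q : ℝ => (1 - q) * Real.log (1 - q))
      (-(Real.log (1 - p)) - 1) p := by
    have := hinner.mul (hinner.log h2.ne')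
    refine this.congr_deriv ?_
    rw [show (1-p)*(-1/(1-p)) = -1 by field_simp]
    ring
  have hc : HasDerivAt (fun q : ℝ => 2 * (q - 1/2)^2) (4 * (p - 1/2)) p := by
    have := (((hasDerivAt_id p).sub_const (1/2)).pow 2).const_mul (2:ℝ)
    refine this.congr_deriv ?_
    simp only [id_eq]; push_cast
    ring
  have := (((ha.add hb).add_const (Real.log 2)).sub hc)
  refine this.congr_deriv ?_
  ring

private lemma f_nonneg (p : ℝ) (h0 : 0 < p) (h1 : p < 1) :
    0 ≤ p * Real.log p + (1 - p) * Real.log (1 - p) + Real.log 2 - 2 * (p - 1/2)^2 := by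
  set f : ℝ → ℝ := fun q => q * Real.log q + (1 - q) * Real.log (1 - q)
      + Real.log 2 - 2 * (q - 1/2)^2 with hf
  set g : ℝ → ℝ := fun q => Real.log q - Real.log (1 - q) - 4 * q + 2 with hg
  have ghalf : g (1/2) = 0 := by simp only [hg]; norm_num
  have fhalf : f (1/2) = 0 := by
    simp only [hf]
    have : Real.log (1/2) = - Real.log 2 := by
      rw [one_div, Real.log_inv]
    norm_num [this]
    ring
  have fcont : ∀ a b : ℝ, 0 < a → b < 1 → ContinuousOn f (Set.Icc a b) := by
    intro a b ha hb
    apply ContinuousOn.sub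
    apply ContinuousOn.add
    apply ContinuousOn.add
    · exact ContinuousOn.mul (by fun_prop) (Real.continuousOn_log.mono
        (by intro x hx; exact ne_of_gt (lt_of_lt_of_le ha hx.1)))
    · exact ContinuousOn.mul (by fun_prop) (ContinuousOn.log (by fun_prop)
        (by intro x hx; intro h; have := hx.2; linarith))
    · fun_prop
    · fun_prop
  -- case split
  rcases le_total p (1/2) with hp | hp
  · -- antitone on [p, 1/2]
    have := antitoneOn_of_deriv_nonpos (convex_Icc p (1/2))
      (fcont p (1/2) h0 (by norm_num))
      (by
        rw [interior_Icc]
        intro x hx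
        have hx0 : 0 < x := lt_of_le_of_lt h0.le (by exact hx.1) |>.trans_le le_rfl
        exact (deriv_f x (h0.trans hx.1) (by linarith [hx.2])).differentiableAt.differentiableWithinAt)
      (by
        rw [interior_Icc]
        intro x hx
        have hx0 : 0 < x := h0.trans hx.1
        have hx1 : x < 1 := by linarith [hx.2]
        rw [(deriv_f x hx0 hx1).deriv]
        have := g_mono (Set.mem_Ioo.mpr ⟨hx0, hx1⟩) (Set.mem_Ioo.mpr ⟨by norm_num, by norm_num⟩)
          (le_of_lt hx.2)
        simp only [hg] at this ghalf
        linarith)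
    have h := this (Set.mem_Icc.mpr ⟨le_refl p, hp⟩) (Set.mem_Icc.mpr ⟨hp, le_refl _⟩) hp
    rw [fhalf] at h; exact h
  · -- monotone on [1/2, p]
    have := monotoneOn_of_deriv_nonneg (convex_Icc (1/2) p)
      (fcont (1/2) p (by norm_num) h1)
      (by
        rw [interior_Icc]
        intro x hx
        exact (deriv_f x (by linarith [hx.1]) (lt_trans hx.2 h1)).differentiableAt.differentiableWithinAt)
      (by
        rw [interior_Icc]
        intro x hx
        have hx0 : (0:ℝ) < x := by linarith [hx.1]
        have hx1 : x < 1 := lt_trans hx.2 h1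
        rw [(deriv_f x hx0 hx1).deriv]
        have := g_mono (Set.mem_Ioo.mpr ⟨by norm_num, by norm_num⟩) (Set.mem_Ioo.mpr ⟨hx0, hx1⟩)
          (le_of_lt hx.1)
        simp only [hg] at this ghalf
        linarith)
    have h := this (Set.mem_Icc.mpr ⟨le_refl _, hp⟩) (Set.mem_Icc.mpr ⟨hp, le_refl p⟩) hp
    rw [fhalf] at h; exact h

/-- abstract form -/
private lemma midpoint_aux (p s : ℝ) (hp0 : 0 < p) (hp1 : p < 1) (hs : 0 < s) :
    (p*s - (1-p)*s)^2 / (2*s) ≤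
      (p*s) * Real.log (p*s) + ((1-p)*s) * Real.log ((1-p)*s) - s * Real.log (s/2) := by
  have h1p : (0:ℝ) < 1 - p := by linarith
  have key := f_nonneg p hp0 hp1
  rw [Real.log_mul hp0.ne' hs.ne', Real.log_mul h1p.ne' hs.ne',
    Real.log_div hs.ne' two_ne_zero]
  have expand2 : (p*s - (1-p)*s)^2 / (2*s) = s * (2 * (p - 1/2)^2) := by
    field_simp; ring
  rw [expand2]
  have expand : (p*s) * (Real.log p + Real.log s) + ((1-p)*s) * (Real.log (1-p) + Real.log s)
      - s * (Real.log s - Real.log 2)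
      = s * (p * Real.log p + (1-p) * Real.log (1-p) + Real.log 2) := by ring
  rw [expand]
  exact mul_le_mul_of_nonneg_left (by linarith) hs.le

/-- midpoint entropy gap (pointwise Pinsker). -/
private lemma midpoint_entropy (x y : ℝ) (hx : 0 < x) (hy : 0 < y) :
    (x - y)^2 / (2*(x+y)) ≤
      x * Real.log x + y * Real.log y - (x + y) * Real.log ((x+y)/2) := by
  have hs : (0:ℝ) < x + y := by linarith
  have hp0 : 0 < x / (x+y) := div_pos hx hs
  have hp1 : x / (x+y) < 1 := by rw [div_lt_one hs]; linarith
  have hx' : (x/(x+y)) * (x+y) = x := by field_simp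
  have hy' : (1 - x/(x+y)) * (x+y) = y := by field_simp; ring
  have := midpoint_aux (x/(x+y)) (x+y) hp0 hp1 hs
  rw [hx', hy'] at this
  exact this


private lemma klTerm_nonneg {v b : ℝ} (hv : 0 ≤ v) (hb : 0 < b) :
    0 ≤ v * Real.log (v / b) + b - v := by
  rcases eq_or_lt_of_le hv with h | h
  · simp [← h]; linarith
  · have hlog : Real.log (b / v) ≤ b / v - 1 := Real.log_le_sub_one_of_pos (by positivity)
    have : Real.log (v / b) = - Real.log (b / v) := by
      rw [← Real.log_inv]; congr 1; field_simp
    rw [this]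
    have := mul_le_mul_of_nonneg_left hlog h.le
    have hvb : v * (b / v - 1) = b - v := by field_simp
    nlinarith

private lemma klTerm_pos {v b : ℝ} (hv : 0 ≤ v) (hb : 0 < b) (hne : v ≠ b) :
    0 < v * Real.log (v / b) + b - v := by
  rcases eq_or_lt_of_le hv with h | h
  · simp [← h]; linarith
  · have hne' : b / v ≠ 1 := by
      intro hc; apply hne; field_simp at hc; linarith
    have hlog : Real.log (b / v) < b / v - 1 := Real.log_lt_sub_one_of_pos (by positivity) hne'
    have : Real.log (v / b) = - Real.log (b / v) := by
      rw [← Real.log_inv]; congr 1; field_simp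
    rw [this]
    have := mul_lt_mul_of_pos_left hlog h
    have hvb : v * (b / v - 1) = b - v := by field_simp
    nlinarith

private lemma proj_lower {n : ℕ} {κ : ℝ} (hκ1 : κ ≤ 1) {b ν : Fin n → ℝ}
    (hb0 : ∀ i, 0 < b i) (hbκ : ∀ i, b i ≤ κ)
    (h : IsBregmanProj κ b ν) : ∀ i, b i ≤ ν i := by
  by_contra hc
  push_neg at hc
  obtain ⟨i0, hi0⟩ := hc
  set ρ : Fin n → ℝ := Function.update ν i0 (b i0) with hρ
  have hbdd : IsBddMeasure ρ := by
    intro i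
    rcases eq_or_ne i i0 with rfl | hne
    · simp [hρ, Function.update_self]
      exact ⟨(hb0 i).le, (hbκ i).trans hκ1⟩
    · simp [hρ, Function.update_of_ne hne]
      exact (h.1.1 i)
  have hsum : κ * n ≤ ∑ i, ρ i := by
    have hν := h.1.2
    have hsplit : ∑ i, ρ i = b i0 + ∑ i ∈ Finset.univ.erase i0, ν i := by
      rw [hρ, Finset.sum_update_of_mem (Finset.mem_univ i0)]
      congr 1
      apply Finset.sum_congr
      · simp [Finset.sdiff_singleton_eq_erase]
      · intros; rfl
    have hsplit2 : ∑ i, ν i = ν i0 + ∑ i ∈ Finset.univ.erase i0, ν i :=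
      (Finset.add_sum_erase _ _ (Finset.mem_univ i0)).symm
    rw [hsplit]
    rw [hsplit2] at hν
    linarith
  have hlt : KLdiv ρ b < KLdiv ν b := by
    unfold KLdiv
    apply Finset.sum_lt_sum
    · intro i _
      rcases eq_or_ne i i0 with rfl | hne
      · simp [hρ, Function.update_self]
        have h0 : b i * Real.log (b i / b i) = 0 := by
          rw [div_self (hb0 i).ne']; simp
        have := klTerm_nonneg (h.1.1 i).1 (hb0 i)
        linarith
      · simp [hρ, Function.update_of_ne hne]
    · refine ⟨i0, Finset.mem_univ i0, ?_⟩
      simp [hρ, Function.update_self]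
      have h0 : b i0 * Real.log (b i0 / b i0) = 0 := by
        rw [div_self (hb0 i0).ne']; simp
      have := klTerm_pos (h.1.1 i0).1 (hb0 i0) (ne_of_lt hi0)
      linarith
  have := h.2 ρ hbdd hsum
  linarith

private lemma proj_sum {n : ℕ} {κ : ℝ} (hκ1 : κ ≤ 1) {b ν : Fin n → ℝ}
    (hb0 : ∀ i, 0 < b i) (hbκ : ∀ i, b i ≤ κ)
    (h : IsBregmanProj κ b ν) : ∑ i, ν i = κ * n := by
  have hsb : ∑ i, b i ≤ κ * n := by
    calc ∑ i, b i ≤ ∑ _i : Fin n, κ := Finset.sum_le_sum (fun i _ => hbκ i)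
      _ = κ * n := by simp [Finset.sum_const, mul_comm]
  rcases eq_or_lt_of_le h.1.2 with heq | hgt
  · exact heq.symm
  · exfalso
    have hdpos : 0 < ∑ i, ν i - ∑ i, b i := by linarith
    set θ : ℝ := (∑ i, ν i - κ * n) / (∑ i, ν i - ∑ i, b i) with hθ
    have hθ0 : 0 < θ := div_pos (by linarith) hdpos
    have hθ1 : θ ≤ 1 := by
      rw [hθ, div_le_one hdpos]; linarith
    set ρ : Fin n → ℝ := fun i => θ * b i + (1 - θ) * ν i with hρ
    have hbdd : IsBddMeasure ρ := by
      intro i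
      have h1 := h.1.1 i
      have h2 := hb0 i
      have h3 := (hbκ i).trans hκ1
      simp only [Set.mem_Icc] at h1 ⊢
      have hρi : ρ i = θ * b i + (1 - θ) * ν i := rfl
      have ha : 0 ≤ θ * b i := by positivity
      have hb' : 0 ≤ (1 - θ) * ν i := mul_nonneg (by linarith) h1.1
      have hc : θ * b i ≤ θ * 1 := by nlinarith
      have hd : (1 - θ) * ν i ≤ (1 - θ) * 1 := by nlinarith [h1.2]
      constructor
      · linarith
      · linarith
    have hsum : κ * n ≤ ∑ i, ρ i := by
      have : ∑ i, ρ i = θ * ∑ i, b i + (1 - θ) * ∑ i, ν i := by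
        simp only [hρ, Finset.sum_add_distrib, Finset.mul_sum]
      rw [this, hθ]
      have : (∑ i, ν i - κ * n) / (∑ i, ν i - ∑ i, b i) * ∑ i, b i
          + (1 - (∑ i, ν i - κ * n) / (∑ i, ν i - ∑ i, b i)) * ∑ i, ν i = κ * n := by
        field_simp
        ring
      rw [this]
    -- convexity: KLdiv ρ b ≤ (1-θ) * KLdiv ν b
    have hconv : KLdiv ρ b ≤ (1 - θ) * KLdiv ν b := by
      have hpt : ∀ i, ρ i * Real.log (ρ i / b i) + b i - ρ i
          ≤ (1 - θ) * (ν i * Real.log (ν i / b i) + b i - ν i) := by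
        intro i
        have hb := hb0 i
        have hν0 := (h.1.1 i).1
        have key := Real.convexOn_mul_log.2 (Set.mem_Ici.mpr hb.le) (Set.mem_Ici.mpr hν0)
          hθ0.le (by linarith : (0:ℝ) ≤ 1 - θ) (by ring)
        simp only [smul_eq_mul] at key
        -- expand v * log (v / b) = v * log v - v * log b
        have expand : ∀ v : ℝ, 0 ≤ v → v * Real.log (v / b i) = v * Real.log v - v * Real.log (b i) := by
          intro v hv
          rcases eq_or_lt_of_le hv with rfl | hv'
          · simp
          · rw [Real.log_div hv'.ne' hb.ne']; ring
        have hρi : ρ i = θ * b i + (1 - θ) * ν i := rfl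
        have hρ0 : 0 ≤ ρ i := by
          have ha : 0 ≤ θ * b i := by positivity
          have hb' : 0 ≤ (1 - θ) * ν i := mul_nonneg (by linarith) hν0
          linarith
        rw [expand _ hρ0, expand _ hν0]
        have hbb : b i * Real.log (b i / b i) = 0 := by rw [div_self hb.ne']; simp
        have expb : (θ * b i + (1 - θ) * ν i) * Real.log (θ * b i + (1 - θ) * ν i)
            ≤ θ * (b i * Real.log (b i)) + (1 - θ) * (ν i * Real.log (ν i)) := key
        have hthis : ρ i * Real.log (ρ i) ≤ θ * (b i * Real.log (b i)) + (1 - θ) * (ν i * Real.log (ν i)) := by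
          rw [hρi]; exact expb
        have hexp2 : ρ i * Real.log (b i) = θ * b i * Real.log (b i) + (1 - θ) * ν i * Real.log (b i) := by
          rw [hρi]; ring
        have hmul : (1 - θ) * (ν i * Real.log (ν i) - ν i * Real.log (b i) + b i - ν i)
            = (1 - θ) * (ν i * Real.log (ν i)) - (1 - θ) * ν i * Real.log (b i) + (1 - θ) * b i - (1 - θ) * ν i := by
          ring
        rw [hmul]
        have hbl : θ * (b i * Real.log (b i)) = θ * b i * Real.log (b i) := by ring
        linarith [hρi]
      calc KLdiv ρ b = ∑ i, (ρ i * Real.log (ρ i / b i) + b i - ρ i) := rfl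
        _ ≤ ∑ i, (1 - θ) * (ν i * Real.log (ν i / b i) + b i - ν i) := Finset.sum_le_sum (fun i _ => hpt i)
        _ = (1 - θ) * KLdiv ν b := by rw [← Finset.mul_sum]; rfl
    have hmin := h.2 ρ hbdd hsum
    -- so KLdiv ν b ≤ (1-θ) KLdiv ν b, θ > 0 ⇒ KLdiv ν b ≤ 0
    have hKL0 : KLdiv ν b ≤ 0 := by nlinarith
    -- but KLdiv ν b > 0 since ν ≠ b
    have hne : ∃ i, ν i ≠ b i := by
      by_contra hc
      push_neg at hc
      have : ∑ i, ν i = ∑ i, b i := Finset.sum_congr rfl (fun i _ => hc i)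
      linarith
    obtain ⟨i0, hi0⟩ := hne
    have hpos : 0 < KLdiv ν b := by
      unfold KLdiv
      apply Finset.sum_pos' (fun i _ => klTerm_nonneg (h.1.1 i).1 (hb0 i))
      exact ⟨i0, Finset.mem_univ i0, klTerm_pos (h.1.1 i0).1 (hb0 i0) hi0⟩
    linarith

/-- **Stability of consecutive lazy dense updates.**  With
`μ_t = Π_Γ(e^{−λΣ_{s<t} ℓ_s}·μ₁)`, consecutive measures satisfy
`‖μ_T − μ_{T+1}‖₁ ≤ λκn`, and hence
`M(μ̂_T, ℓ_T) − M(μ̂_{T+1}, ℓ_T) ≤ λ`. -/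
theorem lazy_dense_consecutive_stability {n : ℕ} (hn : 0 < n) (T : ℕ) (hT : 1 ≤ T)
    (κ lam : ℝ) (hκ : κ ∈ Set.Ioo (0:ℝ) 1) (hlam : lam ∈ Set.Ioo (0:ℝ) 1)
    (μ₁ : Fin n → ℝ) (hμ₁ : ∀ i, μ₁ i = κ)
    (ℓ : ℕ → Fin n → ℝ)
    (hℓ : ∀ t, 1 ≤ t → t ≤ T + 1 → ∀ i, ℓ t i ∈ Set.Icc (0:ℝ) 1)
    (μ : ℕ → Fin n → ℝ)
    (hproj : ∀ t, 1 ≤ t → t ≤ T + 1 →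
      IsBregmanProj κ
        (fun i => Real.exp (-lam * ∑ s ∈ Finset.Ico 1 t, ℓ s i) * μ₁ i) (μ t)) :
    (∑ i, |μ T i - μ (T + 1) i| ≤ lam * κ * n) ∧
      (∑ i, (μ T i / ∑ k, μ T k) * ℓ T i)
          - (∑ i, (μ (T + 1) i / ∑ k, μ (T + 1) k) * ℓ T i) ≤ lam := by
  obtain ⟨hκ0, hκ1⟩ := hκ
  obtain ⟨hl0, hl1⟩ := hlam
  have hκ1' : κ ≤ 1 := hκ1.le
  have hnR : (0:ℝ) < n := Nat.cast_pos.mpr hn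
  have hP1 := hproj T hT (by omega)
  have hP2 := hproj (T+1) (by omega) le_rfl
  set x : Fin n → ℝ := μ T with hxdef
  set y : Fin n → ℝ := μ (T+1) with hydef
  set b1 : Fin n → ℝ := fun i => Real.exp (-lam * ∑ s ∈ Finset.Ico 1 T, ℓ s i) * μ₁ i with hb1def
  set b2 : Fin n → ℝ := fun i => Real.exp (-lam * ∑ s ∈ Finset.Ico 1 (T+1), ℓ s i) * μ₁ i with hb2def
  have hℓT := hℓ T hT (by omega)
  have hS1 : ∀ i, 0 ≤ ∑ s ∈ Finset.Ico 1 T, ℓ s i := by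
    intro i
    apply Finset.sum_nonneg
    intro s hs
    rw [Finset.mem_Ico] at hs
    exact (hℓ s hs.1 (by omega) i).1
  have hS2 : ∀ i, 0 ≤ ∑ s ∈ Finset.Ico 1 (T+1), ℓ s i := by
    intro i
    apply Finset.sum_nonneg
    intro s hs
    rw [Finset.mem_Ico] at hs
    exact (hℓ s hs.1 (by omega) i).1
  have hb1pos : ∀ i, 0 < b1 i := by
    intro i; rw [hb1def]; simp only; rw [hμ₁ i]; positivity
  have hb2pos : ∀ i, 0 < b2 i := by
    intro i; rw [hb2def]; simp only; rw [hμ₁ i]; positivity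
  have hb1κ : ∀ i, b1 i ≤ κ := by
    intro i; rw [hb1def]; simp only; rw [hμ₁ i]
    have he : Real.exp (-lam * ∑ s ∈ Finset.Ico 1 T, ℓ s i) ≤ 1 := by
      rw [Real.exp_le_one_iff]
      have := hS1 i; nlinarith
    nlinarith
  have hb2κ : ∀ i, b2 i ≤ κ := by
    intro i; rw [hb2def]; simp only; rw [hμ₁ i]
    have he : Real.exp (-lam * ∑ s ∈ Finset.Ico 1 (T+1), ℓ s i) ≤ 1 := by
      rw [Real.exp_le_one_iff]
      have := hS2 i; nlinarith
    nlinarith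
  have hlog : ∀ i, Real.log (b1 i) - Real.log (b2 i) = lam * ℓ T i := by
    intro i
    have hsplit : ∑ s ∈ Finset.Ico 1 (T+1), ℓ s i = (∑ s ∈ Finset.Ico 1 T, ℓ s i) + ℓ T i :=
      Finset.sum_Ico_succ_top hT _
    rw [hb1def, hb2def]; simp only
    rw [hμ₁ i, Real.log_mul (Real.exp_ne_zero _) hκ0.ne',
      Real.log_mul (Real.exp_ne_zero _) hκ0.ne', Real.log_exp, Real.log_exp, hsplit]
    ring
  have hx_lb : ∀ i, b1 i ≤ x i := proj_lower hκ1' hb1pos hb1κ hP1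
  have hy_lb : ∀ i, b2 i ≤ y i := proj_lower hκ1' hb2pos hb2κ hP2
  have hxpos : ∀ i, 0 < x i := fun i => lt_of_lt_of_le (hb1pos i) (hx_lb i)
  have hypos : ∀ i, 0 < y i := fun i => lt_of_lt_of_le (hb2pos i) (hy_lb i)
  have hx_sum : ∑ i, x i = κ * n := proj_sum hκ1' hb1pos hb1κ hP1
  have hy_sum : ∑ i, y i = κ * n := proj_sum hκ1' hb2pos hb2κ hP2
  -- midpoint
  set z : Fin n → ℝ := fun i => (x i + y i)/2 with hzdef
  have hzbdd : IsBddMeasure z := by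
    intro i
    have h1 := hP1.1.1 i
    have h2 := hP2.1.1 i
    simp only [Set.mem_Icc] at h1 h2 ⊢
    constructor
    · rw [hzdef]; simp only; linarith [h1.1, h2.1]
    · rw [hzdef]; simp only; linarith [h1.2, h2.2]
  have hzsum : κ * n ≤ ∑ i, z i := by
    have : ∑ i, z i = ((∑ i, x i) + (∑ i, y i))/2 := by
      rw [hzdef, ← Finset.sum_add_distrib, Finset.sum_div]
    rw [this, hx_sum, hy_sum]
    linarith
  have hmin1 : KLdiv x b1 ≤ KLdiv z b1 := hP1.2 z hzbdd hzsum
  have hmin2 : KLdiv y b2 ≤ KLdiv z b2 := hP2.2 z hzbdd hzsum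
  -- pointwise identity
  have pt : ∀ i,
      ((z i * Real.log (z i / b1 i) + b1 i - z i) + (z i * Real.log (z i / b2 i) + b2 i - z i))
      - ((x i * Real.log (x i / b1 i) + b1 i - x i) + (y i * Real.log (y i / b2 i) + b2 i - y i))
      = (lam/2) * ((x i - y i) * ℓ T i)
        - (x i * Real.log (x i) + y i * Real.log (y i)
            - (x i + y i) * Real.log ((x i + y i)/2)) := by
    intro i
    have hzpos : 0 < z i := by rw [hzdef]; simp only; linarith [hxpos i, hypos i]
    rw [Real.log_div (hxpos i).ne' (hb1pos i).ne', Real.log_div (hypos i).ne' (hb2pos i).ne',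
      Real.log_div hzpos.ne' (hb1pos i).ne', Real.log_div hzpos.ne' (hb2pos i).ne']
    have hz : z i = (x i + y i)/2 := rfl
    rw [hz]
    linear_combination ((x i - y i)/2) * hlog i
  have hkey : ∑ i, (x i * Real.log (x i) + y i * Real.log (y i)
        - (x i + y i) * Real.log ((x i + y i)/2))
      ≤ (lam/2) * ∑ i, (x i - y i) * ℓ T i := by
    have h0 : (0:ℝ) ≤ (KLdiv z b1 + KLdiv z b2) - (KLdiv x b1 + KLdiv y b2) := by linarith
    have h1 : (KLdiv z b1 + KLdiv z b2) - (KLdiv x b1 + KLdiv y b2)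
        = (lam/2) * (∑ i, (x i - y i) * ℓ T i)
          - ∑ i, (x i * Real.log (x i) + y i * Real.log (y i)
            - (x i + y i) * Real.log ((x i + y i)/2)) := by
      unfold KLdiv
      rw [← Finset.sum_add_distrib, ← Finset.sum_add_distrib, ← Finset.sum_sub_distrib,
        Finset.mul_sum, ← Finset.sum_sub_distrib]
      exact Finset.sum_congr rfl (fun i _ => pt i)
    rw [h1] at h0
    linarith
  -- Cauchy-Schwarz
  set S : ℝ := ∑ i, |x i - y i| with hSdef
  have hS0 : 0 ≤ S := Finset.sum_nonneg (fun i _ => abs_nonneg _)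
  have hsum0 : ∑ i, (x i - y i) = 0 := by
    rw [Finset.sum_sub_distrib, hx_sum, hy_sum]; ring
  have hdl : ∑ i, (x i - y i) * ℓ T i ≤ S/2 := by
    have hpt : ∀ i, (x i - y i) * ℓ T i ≤ ((x i - y i) + |x i - y i|)/2 := by
      intro i
      have hl := hℓT i
      simp only [Set.mem_Icc] at hl
      rcases le_or_gt 0 (x i - y i) with hd | hd
      · rw [abs_of_nonneg hd]
        nlinarith [hl.2]
      · rw [abs_of_neg hd]
        nlinarith [hl.1]
    calc ∑ i, (x i - y i) * ℓ T i ≤ ∑ i, ((x i - y i) + |x i - y i|)/2 :=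
          Finset.sum_le_sum (fun i _ => hpt i)
      _ = ((∑ i, (x i - y i)) + S)/2 := by
          rw [hSdef, ← Finset.sum_add_distrib, Finset.sum_div]
      _ = S/2 := by rw [hsum0]; ring
  have hCS : S^2 ≤ (∑ i, (x i - y i)^2 / (2*(x i + y i))) * (4 * (κ * n)) := by
    have h := Finset.sum_mul_sq_le_sq_mul_sq Finset.univ
      (fun i => |x i - y i| / Real.sqrt (2*(x i + y i)))
      (fun i => Real.sqrt (2*(x i + y i)))
    have e1 : ∀ i : Fin n, |x i - y i| / Real.sqrt (2*(x i + y i)) * Real.sqrt (2*(x i + y i))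
        = |x i - y i| := by
      intro i
      have : (0:ℝ) < 2*(x i + y i) := by linarith [hxpos i, hypos i]
      rw [div_mul_cancel₀]
      exact (Real.sqrt_pos.mpr this).ne'
    have e2 : ∀ i : Fin n, (|x i - y i| / Real.sqrt (2*(x i + y i)))^2
        = (x i - y i)^2 / (2*(x i + y i)) := by
      intro i
      have h2 : (0:ℝ) ≤ 2*(x i + y i) := by linarith [hxpos i, hypos i]
      rw [div_pow, sq_abs, Real.sq_sqrt h2]
    have e3 : ∀ i : Fin n, (Real.sqrt (2*(x i + y i)))^2 = 2*(x i + y i) := by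
      intro i
      have h2 : (0:ℝ) ≤ 2*(x i + y i) := by linarith [hxpos i, hypos i]
      rw [Real.sq_sqrt h2]
    have e4 : ∑ i, 2*(x i + y i) = 4 * (κ * n) := by
      rw [← Finset.mul_sum, Finset.sum_add_distrib, hx_sum, hy_sum]; ring
    calc S^2 = (∑ i, |x i - y i| / Real.sqrt (2*(x i + y i)) * Real.sqrt (2*(x i + y i)))^2 := by
          rw [hSdef]; congr 1; exact (Finset.sum_congr rfl (fun i _ => e1 i)).symm
      _ ≤ (∑ i, (|x i - y i| / Real.sqrt (2*(x i + y i)))^2) * ∑ i, (Real.sqrt (2*(x i + y i)))^2 := h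
      _ = (∑ i, (x i - y i)^2 / (2*(x i + y i))) * (4 * (κ * n)) := by
          rw [Finset.sum_congr rfl (fun i _ => e2 i), Finset.sum_congr rfl (fun i _ => e3 i), e4]
  have hGlb : ∑ i, (x i - y i)^2 / (2*(x i + y i))
      ≤ ∑ i, (x i * Real.log (x i) + y i * Real.log (y i)
        - (x i + y i) * Real.log ((x i + y i)/2)) :=
    Finset.sum_le_sum (fun i _ => midpoint_entropy (x i) (y i) (hxpos i) (hypos i))
  -- combine: S^2 ≤ lam * κ * n * S
  have hfinal : S^2 ≤ lam * κ * n * S := by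
    have h1 : ∑ i, (x i - y i)^2 / (2*(x i + y i)) ≤ (lam/2) * (S/2) := by
      have := hkey
      have h2 : (lam/2) * ∑ i, (x i - y i) * ℓ T i ≤ (lam/2) * (S/2) := by
        apply mul_le_mul_of_nonneg_left hdl (by linarith)
      linarith
    have h3 : (0:ℝ) ≤ 4 * (κ * n) := by positivity
    calc S^2 ≤ (∑ i, (x i - y i)^2 / (2*(x i + y i))) * (4 * (κ * n)) := hCS
      _ ≤ ((lam/2) * (S/2)) * (4 * (κ * n)) := mul_le_mul_of_nonneg_right h1 h3
      _ = lam * κ * n * S := by ring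
  have hSbound : S ≤ lam * κ * n := by
    rcases eq_or_lt_of_le hS0 with h | h
    · rw [← h]; positivity
    · have h2 : S * S ≤ (lam * κ * ↑n) * S := by nlinarith [hfinal]
      exact le_of_mul_le_mul_right h2 h
  constructor
  · exact hSbound
  · rw [hx_sum, hy_sum]
    have hcomb : (∑ i, (x i / (κ * n)) * ℓ T i) - (∑ i, (y i / (κ * n)) * ℓ T i)
        = (∑ i, (x i - y i) * ℓ T i) / (κ * n) := by
      rw [← Finset.sum_sub_distrib, Finset.sum_div]
      exact Finset.sum_congr rfl (fun i _ => by ring)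
    rw [hcomb]
    rw [div_le_iff₀ (by positivity : (0:ℝ) < κ * n)]
    have h4 : ∑ i, (x i - y i) * ℓ T i ≤ S/2 := hdl
    have h5 : lam * κ * ↑n = lam * (κ * ↑n) := by ring
    have h6 : (0:ℝ) ≤ lam * (κ * ↑n) := by positivity
    linarith
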